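/- Suppose h : (0,∞) → ℝ is continuous and strictly monotone with h(1) = 0, and p, q are continuous strictly positive probability densities on [0,1] with transport map T = F_p^{-1} ∘ F_q. If ∫_0^1 ‖h(T'(x))‖² q(x) dx = 0, then there exists a constant c ∈ ℝ such that T(x) = x + c for all x, and hence p(x + c) = q(x) on the support of q. -/

import Mathlib

/-- degenerate distance implies T is a translation, hence p(·+c) = q. -/
theorem hessian_distance_zero_iff_translation
    (h p q T : ℝ → ℝ)
    (hh : ContinuousOn h (Set.Ioi 0))
    (hhmono : StrictMonoOn h (Set.Ioi 0) ∨ StrictAntiOn h (Set.Ioi 0))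
    (hh1 : h 1 = 0)
    (hpC1 : ContDiffOn ℝ 1 p (Set.Icc 0 1)) (hqC1 : ContDiffOn ℝ 1 q (Set.Icc 0 1))
    (hppos : ∀ x ∈ Set.Icc (0:ℝ) 1, 0 < p x)
    (hqpos : ∀ x ∈ Set.Icc (0:ℝ) 1, 0 < q x)
    (hTC1 : ContDiff ℝ 1 T)
    (hT'pos : ∀ x ∈ Set.Icc (0:ℝ) 1, 0 < deriv T x)
    (hTpush : ∀ x ∈ Set.Icc (0:ℝ) 1, p (T x) * deriv T x = q x)
    (hzero : (∫ x in (0:ℝ)..1, ‖h (deriv T x)‖ ^ 2 * q x) = 0) :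
    ∃ c : ℝ, (∀ x ∈ Set.Icc (0:ℝ) 1, T x = x + c) ∧
      (∀ x ∈ Set.Icc (0:ℝ) 1, p (x + c) = q x) := by
  set g : ℝ → ℝ := fun x => ‖h (deriv T x)‖ ^ 2 * q x with hg
  have hT'cont : Continuous (deriv T) := hTC1.continuous_deriv le_rfl
  have hgcont : ContinuousOn g (Set.Icc 0 1) := by
    apply ContinuousOn.mul _ hqC1.continuousOn
    exact ((hh.comp hT'cont.continuousOn fun x hx => hT'pos x hx).norm.pow 2)
  have hgint : IntervalIntegrable g MeasureTheory.volume 0 1 := by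
    apply ContinuousOn.intervalIntegrable
    rwa [Set.uIcc_of_le (zero_le_one : (0:ℝ) ≤ 1)]
  have hnn : 0 ≤ᵐ[MeasureTheory.volume.restrict (Set.Ioc (0:ℝ) 1)] g := by
    filter_upwards [MeasureTheory.ae_restrict_mem measurableSet_Ioc] with x hx
    exact mul_nonneg (by positivity) (hqpos x (Set.Ioc_subset_Icc_self hx)).le
  have hae : g =ᵐ[MeasureTheory.volume.restrict (Set.Ioc (0:ℝ) 1)] 0 :=
    (intervalIntegral.integral_eq_zero_iff_of_le_of_nonneg_ae zero_le_one hnn hgint).mp hzero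
  rw [MeasureTheory.restrict_Ioc_eq_restrict_Icc] at hae
  have hEq : Set.EqOn g 0 (Set.Icc 0 1) :=
    MeasureTheory.Measure.eqOn_Icc_of_ae_eq MeasureTheory.volume (zero_ne_one) hae hgcont
      continuousOn_const
  have hd1 : ∀ x ∈ Set.Icc (0:ℝ) 1, deriv T x = 1 := by
    intro x hx
    have h0 : g x = 0 := hEq hx
    have hq := hqpos x hx
    have hnorm : ‖h (deriv T x)‖ ^ 2 = 0 := by
      rcases mul_eq_zero.mp h0 with h' | h'
      · exact h'
      · exact absurd h' hq.ne'
    have hval : h (deriv T x) = 0 := by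
      have := pow_eq_zero_iff (n := 2) (by norm_num) |>.mp hnorm
      simpa using this
    have hmem : deriv T x ∈ Set.Ioi (0:ℝ) := hT'pos x hx
    have h1mem : (1:ℝ) ∈ Set.Ioi (0:ℝ) := by norm_num
    rcases hhmono with hm | hm
    · exact hm.injOn hmem h1mem (by rw [hval, hh1])
    · exact hm.injOn hmem h1mem (by rw [hval, hh1])
  refine ⟨T 0, ?_, ?_⟩
  · intro x hx
    have hdiff : ∀ t ∈ Set.uIcc (0:ℝ) x, DifferentiableAt ℝ T t := fun t _ =>
      hTC1.differentiable one_ne_zero t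
    have hint : IntervalIntegrable (deriv T) MeasureTheory.volume 0 x :=
      hT'cont.intervalIntegrable 0 x
    have key : (∫ t in (0:ℝ)..x, deriv T t) = T x - T 0 :=
      intervalIntegral.integral_deriv_eq_sub hdiff hint
    have key2 : (∫ t in (0:ℝ)..x, deriv T t) = x := by
      rw [intervalIntegral.integral_congr (g := fun _ => (1:ℝ))]
      · simp
      · intro t ht
        rw [Set.uIcc_of_le hx.1] at ht
        exact hd1 t ⟨ht.1, ht.2.trans hx.2⟩
    have := key.symm.trans key2
    linarith
  · intro x hx
    have := hTpush x hx
    rw [hd1 x hx, mul_one] at this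
    have hTx : T x = x + T 0 := by
      have hdiff : ∀ t ∈ Set.uIcc (0:ℝ) x, DifferentiableAt ℝ T t := fun t _ =>
        hTC1.differentiable one_ne_zero t
      have hint : IntervalIntegrable (deriv T) MeasureTheory.volume 0 x :=
        hT'cont.intervalIntegrable 0 x
      have key : (∫ t in (0:ℝ)..x, deriv T t) = T x - T 0 :=
        intervalIntegral.integral_deriv_eq_sub hdiff hint
      have key2 : (∫ t in (0:ℝ)..x, deriv T t) = x := by
        rw [intervalIntegral.integral_congr (g := fun _ => (1:ℝ))]
        · simp
        · intro t ht
          rw [Set.uIcc_of_le hx.1] at ht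
          exact hd1 t ⟨ht.1, ht.2.trans hx.2⟩
      have := key.symm.trans key2
      linarith
    rw [← hTx]
    exact this
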